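/- Let P ∈ ℝ[X_1,...,X_N] of total degree p, and suppose there is a constant c > 0 with |∂^α P(x)| ≤ c·P(x) for all nonzero multi-indices α and all x ∈ [1,∞)^N (in particular P > 0 on [1,∞)^N). Set A = c·Σ_{0 < |α| ≤ p} 1/α! and ε = 1/(4A+2). Then for all x ∈ [1,∞)^N and all y ∈ [−2ε, 2ε]^N: |P(x + iy) − P(x)| ≤ (1/2)·P(x), and consequently Re(P(x + iy)) ≥ (1/2)·P(x). -/

import Mathlib

open MvPolynomial

/-- Iterated partial derivative `∂^α` of a multivariate polynomial. -/
noncomputable def pderivIter {N : ℕ} (α : Fin N → ℕ) :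
    Module.End ℝ (MvPolynomial (Fin N) ℝ) :=
  (List.ofFn fun n : Fin N => ((MvPolynomial.pderiv n).toLinearMap ^ α n)).prod

lemma pow_pderiv_monomial {N : ℕ} (n : Fin N) (k : ℕ) (e : Fin N →₀ ℕ) (s : ℝ) :
    (((pderiv n).toLinearMap : Module.End ℝ (MvPolynomial (Fin N) ℝ)) ^ k) (monomial e s)
      = monomial (e - Finsupp.single n k) (s * ((e n).descFactorial k : ℝ)) := by
  induction k with
  | zero => simp
  | succ k ih =>
    rw [pow_succ', Module.End.mul_apply, ih]
    have h1 : (e - Finsupp.single n k) - Finsupp.single n 1 = e - Finsupp.single n (k+1) := by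
      ext m
      by_cases h : m = n <;> simp [h, Finsupp.single_apply, Nat.sub_sub]
    have h2 : (e - Finsupp.single n k) n = e n - k := by simp
    have : ((pderiv n).toLinearMap : Module.End ℝ (MvPolynomial (Fin N) ℝ))
        ((monomial (e - Finsupp.single n k)) (s * ((e n).descFactorial k : ℝ)))
        = (pderiv n) ((monomial (e - Finsupp.single n k)) (s * ((e n).descFactorial k : ℝ))) := rfl
    rw [this, pderiv_monomial, h1, h2, Nat.descFactorial_succ]
    push_cast
    ring_nf

lemma list_pderiv_monomial {N : ℕ} (α : Fin N → ℕ) (e : Fin N →₀ ℕ) (s : ℝ) :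
    ∀ (L : List (Fin N)), L.Nodup →
      ((L.map fun n => (((pderiv n).toLinearMap : Module.End ℝ (MvPolynomial (Fin N) ℝ)) ^ α n)).prod)
        (monomial e s)
      = monomial (e - ∑ n ∈ L.toFinset, Finsupp.single n (α n))
          (s * ∏ n ∈ L.toFinset, ((e n).descFactorial (α n) : ℝ)) := by
  intro L
  induction L with
  | nil => simp
  | cons n L ih =>
    intro hnd
    rw [List.nodup_cons] at hnd
    obtain ⟨hn, hL⟩ := hnd
    rw [List.map_cons, List.prod_cons, Module.End.mul_apply, ih hL, pow_pderiv_monomial]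
    have hmem : n ∉ L.toFinset := by simpa using hn
    have h1 : ((e - ∑ m ∈ L.toFinset, Finsupp.single m (α m)) - Finsupp.single n (α n))
        = e - ∑ m ∈ (n :: L).toFinset, Finsupp.single m (α m) := by
      rw [List.toFinset_cons, Finset.sum_insert hmem]
      ext m
      simp [Nat.sub_sub, Nat.add_comm]
    have h2 : (e - ∑ m ∈ L.toFinset, Finsupp.single m (α m)) n = e n := by
      rw [Finsupp.tsub_apply, Finset.sum_apply']
      have : ∀ m ∈ L.toFinset, Finsupp.single m (α m) n = 0 := by
        intro m hm
        exact Finsupp.single_eq_of_ne (by rintro rfl; exact hmem hm)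
      rw [Finset.sum_eq_zero this]
      simp
    rw [h1, h2, List.toFinset_cons, Finset.prod_insert hmem]
    ring_nf

lemma pderivIter_monomial {N : ℕ} (α : Fin N → ℕ) (e : Fin N →₀ ℕ) (s : ℝ) :
    pderivIter α (monomial e s)
      = monomial (e - ∑ n, Finsupp.single n (α n))
          (s * ∏ n, ((e n).descFactorial (α n) : ℝ)) := by
  have := list_pderiv_monomial α e s (List.finRange N) (List.nodup_finRange N)
  rw [pderivIter, List.ofFn_eq_map]
  simpa [List.toFinset_finRange] using this

lemma pderivIter_zero {N : ℕ} (P : MvPolynomial (Fin N) ℝ) :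
    pderivIter (0 : Fin N → ℕ) P = P := by
  simp [pderivIter]

lemma sum_le_of_le_finsupp {N : ℕ} {α : Fin N → ℕ} {d : Fin N →₀ ℕ}
    (h : ∀ n, α n ≤ d n) : ∑ n, α n ≤ d.sum fun _ e => e := by
  rw [Finsupp.sum_fintype _ _ (fun _ => rfl)]
  exact Finset.sum_le_sum fun n _ => h n

lemma pderivIter_eq_zero_of_totalDegree_lt {N : ℕ} (α : Fin N → ℕ)
    (P : MvPolynomial (Fin N) ℝ) (h : P.totalDegree < ∑ n, α n) :
    pderivIter α P = 0 := by
  conv_lhs => rw [← support_sum_monomial_coeff P]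
  rw [map_sum]
  refine Finset.sum_eq_zero fun d hd => ?_
  rw [pderivIter_monomial]
  have : ∃ n, d n < α n := by
    by_contra hcon
    push_neg at hcon
    exact absurd ((sum_le_of_le_finsupp hcon).trans (le_totalDegree hd)) (by omega)
  obtain ⟨n, hn⟩ := this
  have : ((d n).descFactorial (α n) : ℝ) = 0 := by
    rw [Nat.descFactorial_eq_zero_iff_lt.2 hn]; simp
  rw [Finset.prod_eq_zero (Finset.mem_univ n) this, mul_zero, map_zero]

lemma sum_single_apply {N : ℕ} (α : Fin N → ℕ) (m : Fin N) :
    (∑ n, Finsupp.single n (α n)) m = α m := by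
  rw [Finset.sum_apply']
  rw [Finset.sum_eq_single m (fun b _ hb => Finsupp.single_eq_of_ne' hb) (by simp)]
  simp

lemma taylor_monomial {N : ℕ} (d : Fin N →₀ ℕ) (r : ℝ) (x z : Fin N → ℂ)
    (D : ℕ) (hd : ∀ n, d n ≤ D) :
    aeval (fun n => x n + z n) (monomial d r)
      = ∑ α ∈ Finset.Iic (fun _ : Fin N => D),
          (∏ n, z n ^ α n * ((α n).factorial : ℂ)⁻¹) *
            aeval x (pderivIter α (monomial d r)) := by
  have hsub : Finset.Iic ⇑d ⊆ Finset.Iic (fun _ : Fin N => D) := by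
    intro a ha
    rw [Finset.mem_Iic] at *
    exact fun n => (ha n).trans (hd n)
  rw [← Finset.sum_subset hsub ?vanish]
  case vanish =>
    intro α _ hα
    have : ∃ n, d n < α n := by
      by_contra hcon
      push_neg at hcon
      exact hα (Finset.mem_Iic.2 hcon)
    obtain ⟨n, hn⟩ := this
    have hz : ((d n).descFactorial (α n) : ℝ) = 0 := by
      rw [Nat.descFactorial_eq_zero_iff_lt.2 hn]; simp
    have h0 : pderivIter α (monomial d r) = 0 := by
      rw [pderivIter_monomial,
        Finset.prod_eq_zero (f := fun n => (((d n).descFactorial (α n) : ℕ) : ℝ))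
          (Finset.mem_univ n) hz, mul_zero, map_zero]
    rw [h0, map_zero, mul_zero]
  rw [aeval_monomial, Finsupp.prod_fintype _ _ (fun _ => pow_zero _)]
  have hbin : ∀ n : Fin N, (x n + z n) ^ d n
      = ∑ k ∈ Finset.range (d n + 1), z n ^ k * x n ^ (d n - k) * ((d n).choose k : ℂ) := by
    intro n
    rw [add_comm (x n) (z n), add_pow]
  simp only [hbin]
  rw [Finset.prod_univ_sum]
  have hpi : Fintype.piFinset (fun n => Finset.range (d n + 1)) = Finset.Iic ⇑d := by
    ext a
    simp [Fintype.mem_piFinset, Nat.lt_succ_iff, Pi.le_def]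
  rw [hpi, Finset.mul_sum]
  refine Finset.sum_congr rfl fun α hα => ?_
  rw [Finset.mem_Iic] at hα
  rw [pderivIter_monomial, aeval_monomial, Finsupp.prod_fintype _ _ (fun _ => pow_zero _)]
  have hexp : ∀ n, (d - ∑ m, Finsupp.single m (α m)) n = d n - α n := by
    intro n
    rw [Finsupp.tsub_apply, sum_single_apply]
  simp only [hexp]
  have key : (∏ n, z n ^ α n * ((α n).factorial : ℂ)⁻¹) *
      ((r : ℂ) * ∏ n, (((d n).descFactorial (α n) : ℕ) : ℂ)) *
      ∏ n, x n ^ (d n - α n)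
    = r * ∏ n, (z n ^ α n * x n ^ (d n - α n) * (((d n).choose (α n) : ℕ) : ℂ)) := by
    simp only [Nat.descFactorial_eq_factorial_mul_choose, Nat.cast_mul]
    rw [Finset.prod_mul_distrib, Finset.prod_mul_distrib, Finset.prod_mul_distrib,
      Finset.prod_mul_distrib]
    have hff : (∏ n, (((α n).factorial : ℕ) : ℂ)⁻¹) * (∏ n, (((α n).factorial : ℕ) : ℂ)) = 1 := by
      rw [← Finset.prod_mul_distrib]
      exact Finset.prod_eq_one fun n _ =>
        inv_mul_cancel₀ (Nat.cast_ne_zero.2 (Nat.factorial_ne_zero _))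
    linear_combination (r * (∏ n, z n ^ α n) * (∏ n, x n ^ (d n - α n)) *
      (∏ n, (((d n).choose (α n) : ℕ) : ℂ))) * hff
  simp only [Complex.coe_algebraMap]
  rw [show ((r * ∏ n, ((d n).descFactorial (α n) : ℝ) : ℝ) : ℂ)
      = (r : ℂ) * ∏ n, (((d n).descFactorial (α n) : ℕ) : ℂ) from by push_cast; rfl]
  linear_combination -key

lemma taylor {N : ℕ} (P : MvPolynomial (Fin N) ℝ) (x z : Fin N → ℂ) :
    aeval (fun n => x n + z n) P
      = ∑ α ∈ Finset.Iic (fun _ : Fin N => P.totalDegree),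
          (∏ n, z n ^ α n * ((α n).factorial : ℂ)⁻¹) * aeval x (pderivIter α P) := by
  have hd : ∀ d ∈ P.support, ∀ n, d n ≤ P.totalDegree := by
    intro d hdmem n
    refine le_trans ?_ (le_totalDegree hdmem)
    rw [Finsupp.sum_fintype _ _ (fun _ => rfl)]
    exact Finset.single_le_sum (f := fun m => d m) (fun _ _ => Nat.zero_le _) (Finset.mem_univ n)
  conv_lhs => rw [← support_sum_monomial_coeff P]
  rw [map_sum]
  rw [Finset.sum_congr rfl fun d hdm =>
    taylor_monomial d (coeff d P) x z P.totalDegree (hd d hdm)]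
  rw [Finset.sum_comm]
  refine Finset.sum_congr rfl fun α _ => ?_
  rw [← Finset.mul_sum, ← map_sum, ← map_sum, support_sum_monomial_coeff]

lemma aeval_ofReal {N : ℕ} (Q : MvPolynomial (Fin N) ℝ) (x : Fin N → ℝ) :
    aeval (fun n => (x n : ℂ)) Q = ((eval x Q : ℝ) : ℂ) := by
  have h := (MvPolynomial.eval₂_comp_left Complex.ofRealHom (RingHom.id ℝ) x Q).symm
  rw [RingHom.comp_id] at h
  rw [aeval_def]
  convert h using 2 <;> rfl

theorem control_near_axis {N : ℕ} (P : MvPolynomial (Fin N) ℝ) (c : ℝ) (hc : 0 < c)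
    (hpos : ∀ x : Fin N → ℝ, (∀ n, 1 ≤ x n) → 0 < eval x P)
    (hder : ∀ α : Fin N → ℕ, α ≠ 0 → ∀ x : Fin N → ℝ, (∀ n, 1 ≤ x n) →
      |eval x (pderivIter α P)| ≤ c * eval x P)
    (A ε : ℝ)
    (hA : A = c * ∑ α ∈ (Finset.Iic (fun _ : Fin N => P.totalDegree)).filter
        (fun α : Fin N → ℕ => 0 < ∑ n, α n ∧ ∑ n, α n ≤ P.totalDegree),
        (∏ n, (Nat.factorial (α n) : ℝ))⁻¹)
    (hε : ε = 1 / (4 * A + 2)) :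
    ∀ x : Fin N → ℝ, (∀ n, 1 ≤ x n) → ∀ y : Fin N → ℝ, (∀ n, |y n| ≤ 2 * ε) →
      ‖(aeval (fun n => (x n : ℂ) + (y n : ℂ) * Complex.I) P) - ((eval x P : ℝ) : ℂ)‖ ≤
          (1 / 2) * eval x P ∧
      (1 / 2) * eval x P ≤ (aeval (fun n => (x n : ℂ) + (y n : ℂ) * Complex.I) P).re := by
  intro x hx y hy
  set p := P.totalDegree with hp
  set S : Finset (Fin N → ℕ) := Finset.Iic (fun _ : Fin N => p) with hS
  set z : Fin N → ℂ := fun n => (y n : ℂ) * Complex.I with hz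
  set Px : ℝ := eval x P with hPx
  have hPxpos : 0 < Px := hpos x hx
  -- basic facts about ε and A
  have hTnonneg : 0 ≤ ∑ α ∈ S.filter (fun α : Fin N → ℕ => 0 < ∑ n, α n ∧ ∑ n, α n ≤ p),
      (∏ n, (Nat.factorial (α n) : ℝ))⁻¹ :=
    Finset.sum_nonneg fun α _ => inv_nonneg.2 (Finset.prod_nonneg fun n _ => Nat.cast_nonneg _)
  have hAnonneg : 0 ≤ A := by rw [hA]; positivity
  have h4 : (0:ℝ) < 4 * A + 2 := by linarith
  have hεpos : 0 < ε := by rw [hε]; positivity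
  have h2ε1 : 2 * ε ≤ 1 := by
    rw [hε, show 2 * (1 / (4 * A + 2)) = 2 / (4 * A + 2) by ring, div_le_one h4]
    linarith
  have h2εA : 2 * ε * A ≤ 1 / 2 := by
    rw [hε, show 2 * (1 / (4 * A + 2)) * A = (2 * A) / (4 * A + 2) by ring, div_le_iff₀ h4]
    linarith
  -- Taylor expansion
  set t : (Fin N → ℕ) → ℂ := fun α =>
    (∏ n, z n ^ α n * ((α n).factorial : ℂ)⁻¹) *
      aeval (fun n => (x n : ℂ)) (pderivIter α P) with ht
  have htay : aeval (fun n => (x n : ℂ) + (y n : ℂ) * Complex.I) P = ∑ α ∈ S, t α :=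
    taylor P (fun n => (x n : ℂ)) z
  have h0mem : (0 : Fin N → ℕ) ∈ S := Finset.mem_Iic.2 (fun n => Nat.zero_le _)
  have hterm0 : t 0 = ((Px : ℝ) : ℂ) := by
    rw [ht]
    simp [pderivIter_zero, aeval_ofReal, hPx]
  have hdiff : aeval (fun n => (x n : ℂ) + (y n : ℂ) * Complex.I) P - ((Px : ℝ) : ℂ)
      = ∑ α ∈ S.erase 0, t α := by
    rw [htay, ← Finset.add_sum_erase S t h0mem, hterm0]
    ring
  -- bound each term
  have hbound : ∀ α ∈ S.erase 0, ‖t α‖ ≤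
      (2 * ε * (c * Px)) * (if ∑ n, α n ≤ p then (∏ n, ((α n).factorial : ℝ))⁻¹ else 0) := by
    intro α hα
    obtain ⟨hα0, hαS⟩ := Finset.mem_erase.1 hα
    by_cases hdeg : ∑ n, α n ≤ p
    · simp only [if_pos hdeg, ht]
      rw [aeval_ofReal]
      rw [norm_mul, Complex.norm_real, Real.norm_eq_abs]
      have hnz : ∀ n, ‖z n‖ = |y n| := by
        intro n
        rw [hz]
        simp [Complex.norm_real]
      have hnorm1 : ‖∏ n, z n ^ α n * ((α n).factorial : ℂ)⁻¹‖
          = (∏ n, |y n| ^ α n) * (∏ n, ((α n).factorial : ℝ))⁻¹ := by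
        rw [norm_prod]
        rw [show (∏ n, ‖z n ^ α n * ((α n).factorial : ℂ)⁻¹‖)
            = ∏ n, (|y n| ^ α n * (((α n).factorial : ℝ))⁻¹) from
          Finset.prod_congr rfl fun n _ => by
            rw [norm_mul, norm_pow, hnz n, norm_inv, Complex.norm_natCast]]
        rw [Finset.prod_mul_distrib, ← Finset.prod_inv_distrib]
      rw [hnorm1]
      -- ∏ |y n| ^ α n ≤ 2 ε
      obtain ⟨n0, hn0⟩ : ∃ n0, α n0 ≠ 0 := by
        by_contra hcon
        push_neg at hcon
        exact hα0 (funext hcon)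
      have hyprod : (∏ n, |y n| ^ α n) ≤ 2 * ε := by
        calc (∏ n, |y n| ^ α n) ≤ ∏ n, (if n = n0 then 2 * ε else 1) := by
              refine Finset.prod_le_prod (fun n _ => pow_nonneg (abs_nonneg _) _) ?_
              intro n _
              by_cases h : n = n0
              · subst h
                rw [if_pos rfl]
                calc |y n| ^ α n ≤ (2 * ε) ^ α n :=
                      pow_le_pow_left₀ (abs_nonneg _) (hy n) _
                  _ ≤ (2 * ε) ^ 1 :=
                      pow_le_pow_of_le_one (by linarith) h2ε1 (Nat.one_le_iff_ne_zero.2 hn0)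
                  _ = 2 * ε := pow_one _
              · rw [if_neg h]
                exact pow_le_one₀ (abs_nonneg _) ((hy n).trans h2ε1)
          _ = 2 * ε := by rw [Finset.prod_ite_eq' Finset.univ n0 (fun _ => 2 * ε)]; simp
      have hdb : |eval x (pderivIter α P)| ≤ c * Px := hder α hα0 x hx
      calc (∏ n, |y n| ^ α n) * (∏ n, ((α n).factorial : ℝ))⁻¹ * |eval x (pderivIter α P)|
          ≤ (2 * ε) * (∏ n, ((α n).factorial : ℝ))⁻¹ * (c * Px) := by
            apply mul_le_mul
            · exact mul_le_mul_of_nonneg_right hyprod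
                (inv_nonneg.2 (Finset.prod_nonneg fun n _ => Nat.cast_nonneg _))
            · exact hdb
            · exact abs_nonneg _
            · positivity
        _ = (2 * ε * (c * Px)) * (∏ n, ((α n).factorial : ℝ))⁻¹ := by ring
    · simp only [if_neg hdeg, mul_zero, ht]
      rw [pderivIter_eq_zero_of_totalDegree_lt α P (by omega), map_zero, mul_zero, norm_zero]
  -- sum the bounds
  have hsum : ‖aeval (fun n => (x n : ℂ) + (y n : ℂ) * Complex.I) P - ((Px : ℝ) : ℂ)‖
      ≤ (1 / 2) * Px := by
    rw [hdiff]
    calc ‖∑ α ∈ S.erase 0, t α‖ ≤ ∑ α ∈ S.erase 0, ‖t α‖ := norm_sum_le _ _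
      _ ≤ ∑ α ∈ S.erase 0, (2 * ε * (c * Px)) *
            (if ∑ n, α n ≤ p then (∏ n, ((α n).factorial : ℝ))⁻¹ else 0) :=
          Finset.sum_le_sum hbound
      _ = (2 * ε * (c * Px)) * ∑ α ∈ S.erase 0,
            (if ∑ n, α n ≤ p then (∏ n, ((α n).factorial : ℝ))⁻¹ else 0) := by
          rw [Finset.mul_sum]
      _ = (2 * ε * (c * Px)) * ∑ α ∈ (S.erase 0).filter (fun α => ∑ n, α n ≤ p),
            (∏ n, ((α n).factorial : ℝ))⁻¹ := by rw [Finset.sum_filter]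
      _ = (2 * ε * (c * Px)) * ∑ α ∈ S.filter
            (fun α : Fin N → ℕ => 0 < ∑ n, α n ∧ ∑ n, α n ≤ p),
            (∏ n, ((α n).factorial : ℝ))⁻¹ := by
          congr 1
          apply Finset.sum_congr _ (fun _ _ => rfl)
          ext α
          simp only [Finset.mem_filter, Finset.mem_erase]
          constructor
          · rintro ⟨⟨hne, hmem⟩, hle⟩
            refine ⟨hmem, ?_, hle⟩
            rcases Nat.eq_zero_or_pos (∑ n, α n) with h | h
            · exact absurd (funext fun n => Finset.sum_eq_zero_iff.1 h n (Finset.mem_univ n))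
                hne
            · exact h
          · rintro ⟨hmem, hpos', hle⟩
            refine ⟨⟨?_, hmem⟩, hle⟩
            rintro rfl
            simp at hpos'
      _ = (2 * ε * A) * Px := by rw [hA]; ring
      _ ≤ (1 / 2) * Px := mul_le_mul_of_nonneg_right h2εA hPxpos.le
  refine ⟨hsum, ?_⟩
  have hre : |(aeval (fun n => (x n : ℂ) + (y n : ℂ) * Complex.I) P - ((Px : ℝ) : ℂ)).re|
      ≤ ‖aeval (fun n => (x n : ℂ) + (y n : ℂ) * Complex.I) P - ((Px : ℝ) : ℂ)‖ :=
    Complex.abs_re_le_norm _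
  rw [Complex.sub_re, Complex.ofReal_re] at hre
  have := abs_le.1 (hre.trans hsum)
  have h1 := this.1
  linarith
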